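/- Let F(X,Y) ∈ ℤ[X,Y] be homogeneous of degree d ≥ 2 with non-zero discriminant and content 1, factoring as F = ∏ᵢ Mᵢ over an algebraic closure of ℚ_p. If (x,y) ∈ ℤ² is primitive and i₀ is an index minimizing |Mᵢ(x,y)|_p/‖Mᵢ‖_p, and M_{i₀} is not defined over ℚ_p (i.e., some Galois conjugate of M_{i₀} equals a different factor M_{i₁} up to scalar), then |F(x,y)|_p ≥ |D(F)|_p. -/

import Mathlib

open MvPolynomial Finset

section GaussAux

section Gauss
variable {K : Type*} [NormedField K] [IsUltrametricDist K]

lemma dom_add {x y : K} (h : ‖x‖₊ < ‖y‖₊) : ‖x + y‖₊ = ‖y‖₊ := by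
  rw [IsUltrametricDist.nnnorm_add_eq_max_of_nnnorm_ne_nnnorm h.ne, max_eq_right h.le]

noncomputable def gsup (P : Polynomial K) : NNReal := P.support.sup fun n => ‖P.coeff n‖₊

lemma coeff_le_gsup (P : Polynomial K) (k : ℕ) : ‖P.coeff k‖₊ ≤ gsup P := by
  by_cases h : k ∈ P.support
  · exact Finset.le_sup (f := fun n => ‖P.coeff n‖₊) h
  · rw [Polynomial.notMem_support_iff.mp h]
    simp only [nnnorm_zero]
    exact zero_le

lemma gsup_le_one (P : Polynomial K) (h : ∀ n, ‖P.coeff n‖₊ ≤ 1) : gsup P ≤ 1 :=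
  Finset.sup_le fun n _ => h n

lemma gauss_step (P : Polynomial K) (a b : K) :
    max ‖a‖₊ ‖b‖₊ * gsup P ≤ gsup (P * (Polynomial.C a * Polynomial.X + Polynomial.C b)) := by
  rcases eq_or_ne (max ‖a‖₊ ‖b‖₊) 0 with hm | hm
  · rw [hm, zero_mul]; exact zero_le
  rcases eq_or_ne P 0 with hP | hP
  · subst hP; simp [gsup]
  set g := gsup P with hg
  have hgpos : 0 < g := by
    obtain ⟨k, hk⟩ := Polynomial.support_nonempty.mpr hP
    calc (0:NNReal) < ‖P.coeff k‖₊ := by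
          simpa [nnnorm_pos] using Polynomial.mem_support_iff.mp hk
      _ ≤ g := coeff_le_gsup P k
  have hSn : (P.support.filter (fun k => ‖P.coeff k‖₊ = g)).Nonempty := by
    obtain ⟨k, hk, hke⟩ := Finset.exists_mem_eq_sup P.support
      (Polynomial.support_nonempty.mpr hP) (fun n => ‖P.coeff n‖₊)
    exact ⟨k, Finset.mem_filter.mpr ⟨hk, hke.symm⟩⟩
  set S := P.support.filter (fun k => ‖P.coeff k‖₊ = g) with hS
  have hcoeff : ∀ k, (P * (Polynomial.C a * Polynomial.X + Polynomial.C b)).coeff (k+1)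
      = P.coeff k * a + P.coeff (k+1) * b := by
    intro k
    rw [mul_add, Polynomial.coeff_add, ← mul_assoc, Polynomial.coeff_mul_X,
      Polynomial.coeff_mul_C, Polynomial.coeff_mul_C]
  rcases le_or_gt ‖b‖₊ ‖a‖₊ with hba | hab
  · -- max = ‖a‖
    have hmax : max ‖a‖₊ ‖b‖₊ = ‖a‖₊ := max_eq_left hba
    have hapos : 0 < ‖a‖₊ := by rw [hmax] at hm; exact pos_iff_ne_zero.mpr hm
    set k₀ := S.max' hSn with hk₀
    have hk₀S : k₀ ∈ S := S.max'_mem hSn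
    have hk₀g : ‖P.coeff k₀‖₊ = g := (Finset.mem_filter.mp hk₀S).2
    have hlt : ‖P.coeff (k₀+1)‖₊ < g := by
      rcases lt_or_eq_of_le (coeff_le_gsup P (k₀+1)) with h | h
      · exact h
      · exfalso
        have hmem : k₀ + 1 ∈ S := by
          refine Finset.mem_filter.mpr ⟨Polynomial.mem_support_iff.mpr ?_, h⟩
          intro h0
          rw [h0] at h; simp at h; exact hgpos.ne' h.symm
        have := S.le_max' _ hmem
        omega
    have hub : ‖P.coeff (k₀+1) * b‖₊ < ‖P.coeff k₀ * a‖₊ := by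
      rw [nnnorm_mul, nnnorm_mul, hk₀g]
      calc ‖P.coeff (k₀+1)‖₊ * ‖b‖₊ ≤ ‖P.coeff (k₀+1)‖₊ * ‖a‖₊ := mul_le_mul_right hba _
        _ < g * ‖a‖₊ := mul_lt_mul_of_pos_right hlt hapos
    calc max ‖a‖₊ ‖b‖₊ * g = ‖P.coeff k₀ * a‖₊ := by rw [hmax, nnnorm_mul, hk₀g, mul_comm]
      _ = ‖P.coeff k₀ * a + P.coeff (k₀+1) * b‖₊ := by
          rw [add_comm, dom_add hub]
      _ = ‖(P * (Polynomial.C a * Polynomial.X + Polynomial.C b)).coeff (k₀+1)‖₊ := by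
          rw [hcoeff]
      _ ≤ _ := coeff_le_gsup _ _
  · -- ‖a‖ < ‖b‖
    obtain ⟨k, hkS⟩ := hSn
    have hkg : ‖P.coeff k‖₊ = g := (Finset.mem_filter.mp hkS).2
    have hXb : ∀ m, ‖(P * Polynomial.C a * Polynomial.X).coeff m‖₊ ≤ g * ‖a‖₊ := by
      intro m
      cases m with
      | zero => simp [Polynomial.coeff_mul_X_zero]
      | succ n =>
        rw [Polynomial.coeff_mul_X, Polynomial.coeff_mul_C, nnnorm_mul]
        exact mul_le_mul_left (coeff_le_gsup P n) _
    have hcoeff' : (P * (Polynomial.C a * Polynomial.X + Polynomial.C b)).coeff k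
        = (P * Polynomial.C a * Polynomial.X).coeff k + P.coeff k * b := by
      rw [mul_add, Polynomial.coeff_add, ← mul_assoc, Polynomial.coeff_mul_C]
    have hub : ‖(P * Polynomial.C a * Polynomial.X).coeff k‖₊ < ‖P.coeff k * b‖₊ := by
      rw [nnnorm_mul, hkg]
      calc ‖(P * Polynomial.C a * Polynomial.X).coeff k‖₊ ≤ g * ‖a‖₊ := hXb k
        _ < g * ‖b‖₊ := mul_lt_mul_of_pos_left hab hgpos
    calc max ‖a‖₊ ‖b‖₊ * g = ‖P.coeff k * b‖₊ := by
          rw [max_eq_right hab.le, nnnorm_mul, hkg, mul_comm]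
      _ = ‖(P * (Polynomial.C a * Polynomial.X + Polynomial.C b)).coeff k‖₊ := by
          rw [hcoeff', dom_add hub]
      _ ≤ _ := coeff_le_gsup _ _

lemma gauss_prod {ι : Type*} (s : Finset ι) (a b : ι → K) :
    ∏ i ∈ s, max ‖a i‖₊ ‖b i‖₊ ≤
      gsup (∏ i ∈ s, (Polynomial.C (a i) * Polynomial.X + Polynomial.C (b i))) := by
  induction s using Finset.cons_induction with
  | empty =>
    simp only [Finset.prod_empty]
    calc (1:NNReal) = ‖(1:Polynomial K).coeff 0‖₊ := by simp
      _ ≤ _ := coeff_le_gsup _ _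
  | cons i s' hi ih =>
    rw [Finset.prod_cons, Finset.prod_cons]
    calc max ‖a i‖₊ ‖b i‖₊ * ∏ j ∈ s', max ‖a j‖₊ ‖b j‖₊
        ≤ max ‖a i‖₊ ‖b i‖₊ * gsup (∏ j ∈ s', (Polynomial.C (a j) * Polynomial.X + Polynomial.C (b j))) := mul_le_mul_right ih _
      _ ≤ gsup ((∏ j ∈ s', (Polynomial.C (a j) * Polynomial.X + Polynomial.C (b j))) * (Polynomial.C (a i) * Polynomial.X + Polynomial.C (b i))) := gauss_step _ _ _
      _ = _ := by rw [mul_comm]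

end Gauss

end GaussAux


lemma prod_Ioi_sq {n : ℕ} (g : Fin n → Fin n → ℝ) (hsym : ∀ i j, g i j = g j i) :
    ∏ i, ∏ j ∈ Finset.Ioi i, (g i j)^2 = ∏ i, ∏ j ∈ Finset.univ.erase i, g i j := by
  have h1 : ∀ i j, (g i j)^2 = g i j * g j i := fun i j => by rw [sq, ← hsym]
  have hswap : (∏ i, ∏ j ∈ Finset.Ioi i, g j i) = ∏ j, ∏ i ∈ Finset.Iio j, g j i :=
    Finset.prod_comm' (t' := Finset.univ) (s' := fun y => Finset.Iio y)
      (fun x y => by simp [Finset.mem_Ioi, Finset.mem_Iio])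
  calc ∏ i, ∏ j ∈ Finset.Ioi i, (g i j)^2
      = ∏ i, ((∏ j ∈ Finset.Ioi i, g i j) * ∏ j ∈ Finset.Ioi i, g j i) := by
        simp_rw [h1, Finset.prod_mul_distrib]
    _ = (∏ i, ∏ j ∈ Finset.Ioi i, g i j) * (∏ i, ∏ j ∈ Finset.Ioi i, g j i) :=
        Finset.prod_mul_distrib
    _ = (∏ i, ∏ j ∈ Finset.Ioi i, g i j) * (∏ j, ∏ i ∈ Finset.Iio j, g j i) := by
        rw [hswap]
    _ = ∏ i, ((∏ j ∈ Finset.Ioi i, g i j) * ∏ j ∈ Finset.Iio i, g i j) := by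
        rw [← Finset.prod_mul_distrib]
    _ = ∏ i, ∏ j ∈ Finset.Ioi i ∪ Finset.Iio i, g i j := by
        refine Finset.prod_congr rfl fun i _ => ?_
        rw [Finset.prod_union (by
          simp only [Finset.disjoint_left, Finset.mem_Ioi, Finset.mem_Iio]
          exact fun a h1 h2 => absurd h2 (not_lt_of_gt h1))]
    _ = ∏ i, ∏ j ∈ Finset.univ.erase i, g i j := by
        refine Finset.prod_congr rfl fun i _ => ?_
        congr 1
        ext j
        simp only [Finset.mem_union, Finset.mem_Ioi, Finset.mem_Iio, Finset.mem_erase,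
          Finset.mem_univ, and_true]
        rw [← lt_or_lt_iff_ne]
        tauto

lemma key_ineq {K : Type*} [NormedField K] [IsUltrametricDist K] {d : ℕ} (hd : 2 ≤ d)
    (a b : Fin d → K) (X Y : K)
    (v lam t : Fin d → ℝ) (Δ : Fin d → Fin d → K)
    (hv : ∀ i, v i = ‖a i * X + b i * Y‖)
    (hlam : ∀ i, lam i = max ‖a i‖ ‖b i‖)
    (ht : ∀ i, t i = v i / lam i)
    (hΔ : ∀ i j, Δ i j = a i * b j - a j * b i)
    (hX : ‖X‖ ≤ 1) (hY : ‖Y‖ ≤ 1) (hXY : max ‖X‖ ‖Y‖ = 1)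
    (hP1 : ∏ i, lam i ≤ 1)
    (hlampos : ∀ i, 0 < lam i)
    (i₀ i₁ : Fin d) (hi₁ : i₁ ≠ i₀)
    (hmin : ∀ i, t i₀ ≤ t i)
    (ht10 : t i₁ = t i₀) :
    ∏ i, ∏ j ∈ Finset.Ioi i, ‖Δ i j‖^2 ≤ ∏ i, v i := by
  classical
  set P := ∏ i, lam i with hPdef
  have hP0 : 0 < P := Finset.prod_pos fun i _ => hlampos i
  have hv0 : ∀ i, 0 ≤ v i := fun i => (hv i) ▸ norm_nonneg _
  have htv : ∀ i, v i = lam i * t i := fun i => by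
    rw [ht i, mul_div_cancel₀ _ (hlampos i).ne']
  have ht0 : ∀ i, 0 ≤ t i := fun i => by
    rw [ht i]; exact div_nonneg (hv0 i) (hlampos i).le
  have hvle : ∀ i, v i ≤ lam i := by
    intro i; rw [hv i, hlam i]
    refine le_trans (IsUltrametricDist.norm_add_le_max _ _) (max_le_max ?_ ?_)
    · rw [norm_mul]; exact mul_le_of_le_one_right (norm_nonneg _) hX
    · rw [norm_mul]; exact mul_le_of_le_one_right (norm_nonneg _) hY
  have ht1 : ∀ i, t i ≤ 1 := fun i => by
    rw [ht i]; exact (div_le_one (hlampos i)).mpr (hvle i)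
  have hminv : ∀ i, v i₀ * lam i ≤ v i * lam i₀ := by
    intro i
    have h := hmin i
    rw [ht i₀, ht i] at h
    exact (div_le_div_iff₀ (hlampos i₀) (hlampos i)).mp h
  have hblam : ∀ i, ‖b i‖ ≤ lam i := fun i => by rw [hlam i]; exact le_max_right _ _
  have halam : ∀ i, ‖a i‖ ≤ lam i := fun i => by rw [hlam i]; exact le_max_left _ _
  -- norm bound for Δ
  have hΔb : ∀ i j, ‖Δ i j‖ ≤ max (lam i * v j) (lam j * v i) := by
    intro i j
    have hgen : ∀ u w : K, ‖u * (a i * X + b i * Y) - w * (a j * X + b j * Y)‖ ≤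
        max (‖u‖ * v i) (‖w‖ * v j) := by
      intro u w
      rw [sub_eq_add_neg]
      refine le_trans (IsUltrametricDist.norm_add_le_max _ _) (max_le_max ?_ ?_)
      · exact le_of_eq (by rw [norm_mul, hv i])
      · exact le_of_eq (by rw [norm_neg, norm_mul, hv j])
    have h1 : ‖Δ i j * X‖ ≤ max (‖b j‖ * v i) (‖b i‖ * v j) := by
      rw [show Δ i j * X = b j * (a i * X + b i * Y) - b i * (a j * X + b j * Y) by
        rw [hΔ]; ring]
      exact hgen _ _
    have h2 : ‖Δ i j * Y‖ ≤ max (‖a j‖ * v i) (‖a i‖ * v j) := by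
      rw [show Δ i j * Y = (-(a j)) * (a i * X + b i * Y) - (-(a i)) * (a j * X + b j * Y) by
        rw [hΔ]; ring]
      refine le_trans (hgen _ _) ?_
      rw [norm_neg, norm_neg]
    have hXid : ‖Δ i j‖ = max ‖Δ i j * X‖ ‖Δ i j * Y‖ := by
      rw [norm_mul, norm_mul, ← mul_max_of_nonneg _ _ (norm_nonneg (Δ i j)), hXY, mul_one]
    rw [hXid]
    refine max_le (le_trans h1 (max_le ?_ ?_)) (le_trans h2 (max_le ?_ ?_))
    · exact le_max_of_le_right (mul_le_mul_of_nonneg_right (hblam j) (hv0 i))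
    · exact le_max_of_le_left (mul_le_mul_of_nonneg_right (hblam i) (hv0 j))
    · exact le_max_of_le_right (mul_le_mul_of_nonneg_right (halam j) (hv0 i))
    · exact le_max_of_le_left (mul_le_mul_of_nonneg_right (halam i) (hv0 j))
  -- pairwise bound with gamma
  set γ : Fin d → Fin d → ℝ := fun i j => if i = i₀ then t j else if j = i₀ then t i else 1
    with hγ
  have hγ0 : ∀ i j, 0 ≤ γ i j := by
    intro i j
    simp only [hγ]
    split_ifs
    exacts [ht0 j, ht0 i, zero_le_one]
  have hpair : ∀ i j, j ≠ i → ‖Δ i j‖ ≤ lam i * lam j * γ i j := by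
    intro i j hne
    refine le_trans (hΔb i j) ?_
    by_cases h0 : i = i₀
    · have hγv : γ i j = t j := by simp [hγ, h0]
      rw [hγv, show lam i * lam j * t j = lam i * v j by rw [htv j]; ring]
      refine max_le le_rfl ?_
      have := hminv j
      rw [← h0] at this
      calc lam j * v i = v i * lam j := mul_comm _ _
        _ ≤ v j * lam i := this
        _ = lam i * v j := mul_comm _ _
    · by_cases h1 : j = i₀
      · have hγv : γ i j = t i := by simp [hγ, h0, h1]
        rw [hγv, show lam i * lam j * t i = lam j * v i by rw [htv i]; ring]
        refine max_le ?_ le_rfl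
        have := hminv i
        rw [← h1] at this
        calc lam i * v j = v j * lam i := mul_comm _ _
          _ ≤ v i * lam j := this
          _ = lam j * v i := mul_comm _ _
      · have hγv : γ i j = 1 := by simp [hγ, h0, h1]
        rw [hγv, mul_one]
        refine max_le ?_ ?_
        · exact mul_le_mul_of_nonneg_left (hvle j) (hlampos i).le
        · rw [mul_comm (lam i) (lam j)]
          exact mul_le_mul_of_nonneg_left (hvle i) (hlampos j).le
  -- rewrite LHS with symmetric swap
  have hsym : ∀ i j, ‖Δ i j‖ = ‖Δ j i‖ := by
    intro i j
    rw [hΔ, hΔ, show a j * b i - a i * b j = -(a i * b j - a j * b i) by ring, norm_neg]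
  rw [prod_Ioi_sq (fun i j => ‖Δ i j‖) hsym]
  -- bound by product of pair bounds
  have hstep1 : ∏ i, ∏ j ∈ Finset.univ.erase i, ‖Δ i j‖ ≤
      ∏ i, ∏ j ∈ Finset.univ.erase i, (lam i * lam j * γ i j) := by
    refine Finset.prod_le_prod (fun i _ => Finset.prod_nonneg fun j _ => norm_nonneg _)
      (fun i _ => Finset.prod_le_prod (fun j _ => norm_nonneg _)
        (fun j hj => hpair i j (Finset.mem_erase.mp hj).1))
  refine le_trans hstep1 ?_
  -- compute the RHS product
  have hcard : ∀ i : Fin d, (Finset.univ.erase i).card = d - 1 := by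
    intro i
    rw [Finset.card_erase_of_mem (Finset.mem_univ i), Finset.card_univ, Fintype.card_fin]
  have herase : ∀ i : Fin d, ∏ j ∈ Finset.univ.erase i, lam j = P / lam i := by
    intro i
    rw [eq_div_iff (hlampos i).ne', mul_comm]
    exact Finset.mul_prod_erase Finset.univ lam (Finset.mem_univ i)
  have hlamprod : ∏ i, ∏ j ∈ Finset.univ.erase i, (lam i * lam j) = P ^ (2 * (d-1)) := by
    have hrow : ∀ i : Fin d, ∏ j ∈ Finset.univ.erase i, (lam i * lam j)
        = lam i ^ (d - 1) * (P / lam i) := by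
      intro i
      rw [Finset.prod_mul_distrib, Finset.prod_const, hcard i, herase i]
    calc ∏ i, ∏ j ∈ Finset.univ.erase i, (lam i * lam j)
        = ∏ i, (lam i ^ (d-1) * (P / lam i)) := Finset.prod_congr rfl fun i _ => hrow i
      _ = (∏ i, lam i ^ (d-1)) * ∏ i, (P / lam i) := Finset.prod_mul_distrib
      _ = P ^ (d-1) * (P ^ d / P) := by
          rw [← Finset.prod_pow, Finset.prod_div_distrib, Finset.prod_const,
            Finset.card_univ, Fintype.card_fin, hPdef]
      _ = P ^ (2 * (d-1)) := by
          rw [show d = (d-1)+1 by omega, pow_succ,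
            mul_div_cancel_right₀ _ hP0.ne', ← pow_add]
          congr 1
          omega
  -- gamma product
  set A : ℝ := ∏ j ∈ Finset.univ.erase i₀, t j with hA
  have hA0 : 0 ≤ A := Finset.prod_nonneg fun j _ => ht0 j
  have hAle : A ≤ t i₀ := by
    have hmem : i₁ ∈ Finset.univ.erase i₀ := Finset.mem_erase.mpr ⟨hi₁, Finset.mem_univ _⟩
    calc A = t i₁ * ∏ j ∈ (Finset.univ.erase i₀).erase i₁, t j :=
          (Finset.mul_prod_erase _ _ hmem).symm
      _ ≤ t i₁ * 1 := by
          refine mul_le_mul_of_nonneg_left ?_ (ht0 i₁)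
          exact Finset.prod_le_one (fun j _ => ht0 j) (fun j _ => ht1 j)
      _ = t i₀ := by rw [mul_one, ht10]
  have hγprod : ∏ i, ∏ j ∈ Finset.univ.erase i, γ i j = A * A := by
    rw [← Finset.mul_prod_erase Finset.univ _ (Finset.mem_univ i₀)]
    have hrow0 : ∏ j ∈ Finset.univ.erase i₀, γ i₀ j = A := by
      refine Finset.prod_congr rfl fun j _ => ?_
      simp [hγ]
    have hrowi : ∀ i, i ≠ i₀ → ∏ j ∈ Finset.univ.erase i, γ i j = t i := by
      intro i hne
      have : ∀ j ∈ Finset.univ.erase i, γ i j = if j = i₀ then t i else 1 := by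
        intro j _
        simp [hγ, hne]
      rw [Finset.prod_congr rfl this, Finset.prod_ite_eq' (Finset.univ.erase i) i₀
        (fun _ => t i), if_pos (Finset.mem_erase.mpr ⟨Ne.symm hne, Finset.mem_univ _⟩)]
    have : ∏ i ∈ Finset.univ.erase i₀, ∏ j ∈ Finset.univ.erase i, γ i j
        = ∏ i ∈ Finset.univ.erase i₀, t i := by
      refine Finset.prod_congr rfl fun i hi => hrowi i (Finset.mem_erase.mp hi).1
    rw [hrow0, this]
  -- final chain
  have hsplit : ∏ i, ∏ j ∈ Finset.univ.erase i, (lam i * lam j * γ i j)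
      = P ^ (2*(d-1)) * (A * A) := by
    calc ∏ i, ∏ j ∈ Finset.univ.erase i, (lam i * lam j * γ i j)
        = ∏ i, ((∏ j ∈ Finset.univ.erase i, (lam i * lam j)) *
            ∏ j ∈ Finset.univ.erase i, γ i j) := by
          refine Finset.prod_congr rfl fun i _ => ?_
          rw [← Finset.prod_mul_distrib]
      _ = (∏ i, ∏ j ∈ Finset.univ.erase i, (lam i * lam j)) *
            ∏ i, ∏ j ∈ Finset.univ.erase i, γ i j := Finset.prod_mul_distrib
      _ = P ^ (2*(d-1)) * (A * A) := by rw [hlamprod, hγprod]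
  rw [hsplit]
  have hPpow : P ^ (2*(d-1)) ≤ P := by
    calc P ^ (2*(d-1)) = P ^ (2*d-3) * P := by
          rw [← pow_succ]
          congr 1
          omega
      _ ≤ 1 * P := by
          refine mul_le_mul_of_nonneg_right ?_ hP0.le
          exact pow_le_one₀ hP0.le hP1
      _ = P := one_mul P
  have hAA : A * A ≤ t i₀ * A := mul_le_mul_of_nonneg_right hAle hA0
  calc P ^ (2*(d-1)) * (A * A) ≤ P * (t i₀ * A) := by
        refine mul_le_mul hPpow hAA (by positivity) hP0.le
    _ = ∏ i, (lam i * t i) := by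
        rw [Finset.prod_mul_distrib, ← hPdef, hA, ← Finset.mul_prod_erase Finset.univ t
          (Finset.mem_univ i₀)]
    _ = ∏ i, v i := Finset.prod_congr rfl fun i _ => (htv i).symm


/-- If `F ∈ ℤ[X,Y]` is homogeneous of degree `d ≥ 2` with content 1 and non-zero
discriminant `D`, factoring as `F = ∏ᵢ Mᵢ` into linear forms over a non-archimedean
normed extension `K` of `ℚ_p` (with norm extending the `p`-adic absolute value),
`(x,y)` is a primitive integer point, `i₀` minimizes `|Mᵢ(x,y)|/‖Mᵢ‖`, and `M_{i₀}` is
not defined over `ℚ_p` — witnessed by a norm-preserving `ℚ_p`-automorphism `σ` of `K`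
carrying `M_{i₀}` to a scalar multiple of a different factor `M_{i₁}` — then
`|F(x,y)|_p ≥ |D|_p`. -/
theorem stmt_6 (p : ℕ) [Fact p.Prime] (d : ℕ) (hd : 2 ≤ d)
    (F : MvPolynomial (Fin 2) ℤ) (hhom : F.IsHomogeneous d)
    (hcont : Finset.gcd F.support F.coeff = 1)
    (K : Type*) [NormedField K] [IsUltrametricDist K] [Algebra ℚ_[p] K]
    (hext : ∀ q : ℚ_[p], ‖algebraMap ℚ_[p] K q‖ = ‖q‖)
    (M : Fin d → K × K)
    (hfac : ∀ u v : K, (aeval ![u, v]) F = ∏ i, ((M i).1 * u + (M i).2 * v))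
    (D : ℤ) (hD0 : D ≠ 0)
    (hD : (D : K) = ∏ i, ∏ j ∈ Finset.Ioi i,
      ((M i).1 * (M j).2 - (M j).1 * (M i).2) ^ 2)
    (x y : ℤ) (hxy : Int.gcd x y = 1)
    (i₀ : Fin d)
    (hmin : ∀ i, ‖(M i₀).1 * (x : K) + (M i₀).2 * (y : K)‖ / max ‖(M i₀).1‖ ‖(M i₀).2‖ ≤
      ‖(M i).1 * (x : K) + (M i).2 * (y : K)‖ / max ‖(M i).1‖ ‖(M i).2‖)
    (σ : K ≃ₐ[ℚ_[p]] K) (hσ : ∀ z : K, ‖σ z‖ = ‖z‖)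
    (i₁ : Fin d) (hi₁ : i₁ ≠ i₀)
    (c : K) (hc : c ≠ 0)
    (hconj : σ (M i₀).1 = c * (M i₁).1 ∧ σ (M i₀).2 = c * (M i₁).2) :
    ‖(D : ℚ_[p])‖ ≤ ‖(((eval ![x, y]) F : ℤ) : ℚ_[p])‖ := by
  classical
  haveI : CharZero K := charZero_of_injective_algebraMap (algebraMap ℚ_[p] K).injective
  -- abbreviations
  set a : Fin d → K := fun i => (M i).1 with ha
  set b : Fin d → K := fun i => (M i).2 with hb
  set v : Fin d → ℝ := fun i => ‖a i * (x:K) + b i * (y:K)‖ with hv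
  set lam : Fin d → ℝ := fun i => max ‖a i‖ ‖b i‖ with hlam
  set t : Fin d → ℝ := fun i => v i / lam i with htdef
  set Δ : Fin d → Fin d → K := fun i j => a i * b j - a j * b i with hΔdef
  -- integer casts have small norm
  have hint : ∀ n : ℤ, ‖(n : K)‖ ≤ 1 := by
    intro n
    have h := hext ((n : ℚ_[p]))
    rw [map_intCast] at h
    rw [h]
    exact Padic.norm_int_le_one n
  have hX1 : ‖(x:K)‖ ≤ 1 := hint x
  have hY1 : ‖(y:K)‖ ≤ 1 := hint y
  have hXY : max ‖(x:K)‖ ‖(y:K)‖ = 1 := by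
    obtain ⟨u, w, huw⟩ := Int.isCoprime_iff_gcd_eq_one.mpr hxy
    refine le_antisymm (max_le hX1 hY1) ?_
    have hcast : ((u:K) * (x:K) + (w:K) * (y:K)) = 1 := by
      have := congrArg (fun z : ℤ => (z : K)) huw
      push_cast at this
      simpa using this
    calc (1:ℝ) = ‖((u:K) * (x:K) + (w:K) * (y:K))‖ := by rw [hcast, norm_one]
      _ ≤ max ‖(u:K) * (x:K)‖ ‖(w:K) * (y:K)‖ := IsUltrametricDist.norm_add_le_max _ _
      _ ≤ max ‖(x:K)‖ ‖(y:K)‖ := by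
          refine max_le_max ?_ ?_ <;> rw [norm_mul]
          · exact mul_le_of_le_one_left (norm_nonneg _) (hint u)
          · exact mul_le_of_le_one_left (norm_nonneg _) (hint w)
  -- D is nonzero in K
  have hDnorm : ‖(D:K)‖ = ‖(D:ℚ_[p])‖ := by
    have h := hext ((D : ℚ_[p]))
    rw [map_intCast] at h
    exact h
  have hDK0 : (D:K) ≠ 0 := by
    intro h0
    rw [h0, norm_zero] at hDnorm
    exact (norm_ne_zero_iff.mpr (Int.cast_ne_zero.mpr hD0 : (D:ℚ_[p]) ≠ 0)) hDnorm.symm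
  -- nonvanishing determinants
  have hne : ∀ i j : Fin d, i < j → Δ i j ≠ 0 := by
    intro i j hij h0
    apply hDK0
    rw [hD]
    refine Finset.prod_eq_zero (Finset.mem_univ i) ?_
    refine Finset.prod_eq_zero (Finset.mem_Ioi.mpr hij) ?_
    have : Δ i j = (M i).1 * (M j).2 - (M j).1 * (M i).2 := rfl
    rw [← this, h0]
    norm_num
  -- positivity of lam
  have hlampos : ∀ i, 0 < lam i := by
    intro i
    rcases lt_or_eq_of_le (le_max_iff.mpr (Or.inl (norm_nonneg (a i))) : (0:ℝ) ≤ lam i)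
      with h | h
    · exact h
    exfalso
    have ha0 : a i = 0 := by
      have : ‖a i‖ ≤ 0 := le_trans (le_max_left _ _) h.symm.le
      simpa using le_antisymm this (norm_nonneg _)
    have hb0 : b i = 0 := by
      have : ‖b i‖ ≤ 0 := le_trans (le_max_right _ _) h.symm.le
      simpa using le_antisymm this (norm_nonneg _)
    by_cases h0 : (i : ℕ) = 0
    · have hij : i < (⟨1, by omega⟩ : Fin d) := by
        rw [Fin.lt_def]
        show (i:ℕ) < 1
        omega
      exact hne i _ hij (by simp [hΔdef, ha0, hb0])
    · have hij : (⟨0, by omega⟩ : Fin d) < i := by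
        rw [Fin.lt_def]
        show 0 < (i:ℕ)
        omega
      exact hne _ i hij (by simp [hΔdef, ha0, hb0])
  -- conjugation facts
  obtain ⟨hc1, hc2⟩ := hconj
  have hcn : 0 < ‖c‖ := norm_pos_iff.mpr hc
  have hv10 : v i₀ = ‖c‖ * v i₁ := by
    show ‖a i₀ * (x:K) + b i₀ * (y:K)‖ = ‖c‖ * ‖a i₁ * (x:K) + b i₁ * (y:K)‖
    rw [← hσ (a i₀ * (x:K) + b i₀ * (y:K)), map_add, map_mul, map_mul,
      map_intCast, map_intCast]
    have e1 : σ (a i₀) = c * a i₁ := hc1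
    have e2 : σ (b i₀) = c * b i₁ := hc2
    rw [e1, e2, show c * a i₁ * (x:K) + c * b i₁ * (y:K)
        = c * (a i₁ * (x:K) + b i₁ * (y:K)) by ring, norm_mul]
  have hlam10 : lam i₀ = ‖c‖ * lam i₁ := by
    show max ‖a i₀‖ ‖b i₀‖ = ‖c‖ * max ‖a i₁‖ ‖b i₁‖
    rw [← hσ (a i₀), ← hσ (b i₀), (show σ (a i₀) = c * a i₁ from hc1),
      (show σ (b i₀) = c * b i₁ from hc2), norm_mul, norm_mul,
      mul_max_of_nonneg _ _ (norm_nonneg c)]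
  have ht10 : t i₁ = t i₀ := by
    show v i₁ / lam i₁ = v i₀ / lam i₀
    rw [hv10, hlam10, mul_div_mul_left _ _ hcn.ne']
  -- Gauss: product of lams is at most 1
  have hP1 : ∏ i, lam i ≤ 1 := by
    have hQ : (MvPolynomial.aeval (![Polynomial.X, 1] : Fin 2 → Polynomial ℤ) F).map
        (Int.castRingHom K) = ∏ i, (Polynomial.C (a i) * Polynomial.X + Polynomial.C (b i)) := by
      apply Polynomial.funext
      intro r
      rw [Polynomial.eval_map, ← algebraMap_int_eq, ← Polynomial.aeval_def,
        MvPolynomial.comp_aeval_apply (f := (![Polynomial.X, 1] : Fin 2 → Polynomial ℤ))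
          (φ := Polynomial.aeval r)]
      have harg : (fun i => (Polynomial.aeval r) ((![Polynomial.X, 1] : Fin 2 → Polynomial ℤ) i))
          = ![r, (1:K)] := by
        funext i
        fin_cases i <;> simp
      rw [harg, hfac r 1, Polynomial.eval_prod]
      refine Finset.prod_congr rfl fun i _ => ?_
      simp [mul_one, ha, hb]
    have hgle : gsup ((MvPolynomial.aeval (![Polynomial.X, 1] : Fin 2 → Polynomial ℤ) F).map
        (Int.castRingHom K)) ≤ 1 := by
      refine gsup_le_one _ fun n => ?_
      rw [Polynomial.coeff_map]
      have := hint ((MvPolynomial.aeval (![Polynomial.X, 1] : Fin 2 → Polynomial ℤ) F).coeff n)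
      simpa [← NNReal.coe_le_coe] using this
    have hGauss := gauss_prod (Finset.univ : Finset (Fin d)) a b
    rw [← hQ] at hGauss
    have hnn : ∏ i, (max ‖a i‖₊ ‖b i‖₊ : NNReal) ≤ 1 := le_trans hGauss hgle
    have hcast : ∏ i, lam i = ((∏ i, max ‖a i‖₊ ‖b i‖₊ : NNReal) : ℝ) := by
      rw [NNReal.coe_prod]
      refine Finset.prod_congr rfl fun i _ => ?_
      simp [hlam, NNReal.coe_max]
    rw [hcast]
    exact_mod_cast hnn
  -- apply the key inequality
  have hkey := key_ineq hd a b (x:K) (y:K) v lam t Δ (fun i => rfl) (fun i => rfl)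
    (fun i => rfl) (fun i j => rfl) hX1 hY1 hXY hP1 hlampos i₀ i₁ hi₁ hmin ht10
  -- identify LHS with ‖D‖ and RHS with ‖F(x,y)‖
  have hDval : ‖(D:K)‖ = ∏ i, ∏ j ∈ Finset.Ioi i, ‖Δ i j‖^2 := by
    rw [hD]
    rw [norm_prod]
    refine Finset.prod_congr rfl fun i _ => ?_
    rw [norm_prod]
    refine Finset.prod_congr rfl fun j _ => ?_
    rw [norm_pow]
  set N : ℤ := (eval ![x, y]) F with hN
  have hNK : ((N : ℤ) : K) = MvPolynomial.aeval ![(x:K), (y:K)] F := by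
    have e1 : MvPolynomial.aeval ![x, y] F = N := by
      rw [MvPolynomial.aeval_def, Algebra.algebraMap_self, MvPolynomial.eval₂_id]
    calc ((N : ℤ) : K) = (Int.castRingHom K).toIntAlgHom (MvPolynomial.aeval ![x, y] F) := by
          rw [e1]; rfl
      _ = MvPolynomial.aeval (fun i => ((Int.castRingHom K).toIntAlgHom) (![x, y] i)) F :=
          MvPolynomial.comp_aeval_apply (f := ![x, y]) (φ := (Int.castRingHom K).toIntAlgHom) F
      _ = MvPolynomial.aeval ![(x:K), (y:K)] F := by
          have harg2 : (fun i => ((Int.castRingHom K).toIntAlgHom) (![x, y] i))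
              = (![(x:K), (y:K)] : Fin 2 → K) := by
            funext i
            fin_cases i <;> rfl
          rw [harg2]
  have hRHS : ∏ i, v i = ‖((N:ℤ) : ℚ_[p])‖ := by
    have h1 : ∏ i, v i = ‖MvPolynomial.aeval ![(x:K), (y:K)] F‖ := by
      rw [hfac (x:K) (y:K), norm_prod]
    have h2 := hext ((N : ℚ_[p]))
    rw [map_intCast] at h2
    rw [h1, ← hNK, h2]
  rw [← hDnorm, hDval, ← hRHS]
  exact hkey
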